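/- Under the standing assumptions, the derivative of the equilibrium consumer surplus CS with respect to the targeting precision β, evaluated at β = 0, is strictly negative. -/

import Mathlib

set_option maxHeartbeats 2000000


/-- Under the standing assumptions, the derivative of the equilibrium consumer
surplus CS with respect to the targeting precision β, evaluated at β = 0, is strictly
negative. -/
theorem stmt_13 (t v α δ : ℝ) (ht : 0 < t) (hδ : 0 < δ) (hδα : δ < α) (hα : α < 1)
    (hv1 : t * (α / ((2 - α) * δ) + 1 / 2) < v) (hv2 : v < 2 * t) :
    let CS : ℝ → ℝ := fun b =>
      let P := (α * δ * t + v * ((1 - α) * δ + α * (1 - δ)) + b * (α - δ) * (t - v)) /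
        (2 * (α + δ) - 3 * α * δ - 2 * b * (α - δ))
      (b * ((1 - α) * δ * (2 * P + t - 2 * v) ^ 2 + α * t * (4 * v - 4 * P - t)) +
        (1 - b) * (2 * δ * (P - v) ^ 2 + 2 * α * (P - v) ^ 2 -
          α * δ * (2 * P + t - 2 * v) ^ 2)) / (4 * t)
    deriv CS 0 < 0 := by
  intro CS
  have hα0 : 0 < α := lt_trans hδ hδα
  have hδ1 : δ < 1 := lt_trans hδα hα
  have h2α : 0 < 2 - α := by linarith
  have hv0 : 0 < v := by
    have h1 : 0 < α / ((2 - α) * δ) := div_pos hα0 (mul_pos h2α hδ)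
    nlinarith
  have hd0 : 0 < 2 * (α + δ) - 3 * α * δ := by nlinarith
  have hY0 : (2 * (α + δ) - 3 * α * δ - 2 * (0:ℝ) * (α - δ)) ≠ 0 := by
    norm_num; linarith
  -- derivative of the numerator of P
  have hX : HasDerivAt
      (fun b : ℝ => α * δ * t + v * ((1 - α) * δ + α * (1 - δ)) + b * (α - δ) * (t - v))
      ((α - δ) * (t - v)) 0 := by
    simpa using
      (((hasDerivAt_id' (0:ℝ)).mul_const (α - δ)).mul_const (t - v)).const_add
        (α * δ * t + v * ((1 - α) * δ + α * (1 - δ)))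
  -- derivative of the denominator of P
  have hY : HasDerivAt (fun b : ℝ => 2 * (α + δ) - 3 * α * δ - 2 * b * (α - δ))
      (-(2 * (α - δ))) 0 := by
    simpa using
      (((hasDerivAt_id' (0:ℝ)).const_mul 2).mul_const (α - δ)).const_sub
        (2 * (α + δ) - 3 * α * δ)
  have hP := hX.div hY hY0
  have h1 := ((hP.const_mul 2).add_const t).sub_const (2 * v)
  have h2 := h1.pow 2
  have h3 := ((hP.const_mul 4).const_sub (4 * v)).sub_const t
  have hA := (h2.const_mul ((1 - α) * δ)).add (h3.const_mul (α * t))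
  have hbA := (hasDerivAt_id' (0:ℝ)).mul hA
  have hPv := hP.sub_const v
  have hPv2 := hPv.pow 2
  have hB := ((hPv2.const_mul (2 * δ)).add (hPv2.const_mul (2 * α))).sub
      (h2.const_mul (α * δ))
  have hb1 : HasDerivAt (fun b : ℝ => 1 - b) (-1) 0 := by
    simpa using (hasDerivAt_id' (0:ℝ)).const_sub 1
  have hbB := hb1.mul hB
  have hCS := (hbA.add hbB).div_const (4 * t)
  -- the target derivative value
  have hQ : 2 * ((α + δ) - α * δ) * (2 * (α + δ) ^ 2 - 7 * (α * δ) * (α + δ) + 7 * (α * δ) ^ 2)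
        * (v - t) ^ 2
      + 8 * (α * δ) * ((α + δ) - α * δ) ^ 2 * t * (2 * t - v)
      + (4 * (α + δ) ^ 3 - 10 * (α * δ) * (α + δ) ^ 2 + 2 * (α * δ) ^ 2 * (α + δ)
          + 5 * (α * δ) ^ 3) * t ^ 2 > 0 := by
    have hsp : 0 < (α + δ) - α * δ := by nlinarith
    have hs : 0 < α + δ := by linarith
    have hp : 0 < α * δ := mul_pos hα0 hδ
    have hc : 0 < 2 - (α + δ) := by linarith
    have he : 0 ≤ (α - δ) ^ 2 := sq_nonneg _
    have hquad : 0 < 2 * (α + δ) ^ 2 - 7 * (α * δ) * (α + δ) + 7 * (α * δ) ^ 2 := by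
      nlinarith [sq_nonneg (4 * (α + δ) - 7 * (α * δ)), mul_pos hp hp]
    have hT : 0 < 4 * (α + δ) ^ 3 - 10 * (α * δ) * (α + δ) ^ 2 + 2 * (α * δ) ^ 2 * (α + δ)
        + 5 * (α * δ) ^ 3 := by
      nlinarith [pow_pos hs 3, mul_pos (pow_pos hs 3) hc,
        mul_pos (mul_pos (pow_pos hs 3) hc) hc,
        mul_pos (mul_pos (mul_pos (pow_pos hs 3) hc) hc) hs,
        mul_nonneg he (mul_pos hs hs).le,
        mul_nonneg (mul_nonneg he (mul_pos hs hs).le) hc.le,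
        mul_nonneg (mul_nonneg (mul_nonneg he (mul_pos hs hs).le) hc.le) hs.le,
        mul_nonneg (mul_nonneg he he) hs.le,
        mul_nonneg (mul_nonneg he he) (mul_pos hs hs).le,
        mul_nonneg (mul_nonneg he he) hp.le]
    have hP1 : 0 ≤ 2 * ((α + δ) - α * δ)
        * (2 * (α + δ) ^ 2 - 7 * (α * δ) * (α + δ) + 7 * (α * δ) ^ 2) * (v - t) ^ 2 :=
      mul_nonneg (mul_nonneg (by linarith) hquad.le) (sq_nonneg _)
    have hP2 : 0 < 8 * (α * δ) * ((α + δ) - α * δ) ^ 2 * t * (2 * t - v) := by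
      have : 0 < 2 * t - v := by linarith
      positivity
    nlinarith [mul_pos hT (pow_pos ht 2)]
  have hED3 : (α - δ) *
      (-(2 * ((α + δ) - α * δ) * (2 * (α + δ) ^ 2 - 7 * (α * δ) * (α + δ) + 7 * (α * δ) ^ 2))
          * v ^ 2
        + (2 * (2 * ((α + δ) - α * δ)
            * (2 * (α + δ) ^ 2 - 7 * (α * δ) * (α + δ) + 7 * (α * δ) ^ 2))
            + 8 * (α * δ) * ((α + δ) - α * δ) ^ 2) * (t * v)
        + (-8 * (α + δ) ^ 3 + 12 * (α * δ) * (α + δ) ^ 2 + 2 * (α * δ) ^ 2 * (α + δ)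
            - 7 * (α * δ) ^ 3) * t ^ 2) < 0 := by
    apply mul_neg_of_pos_of_neg (by linarith)
    nlinarith [hQ]
  have hden : 0 < 4 * t * (2 * (α + δ) - 3 * α * δ) ^ 3 :=
    mul_pos (by linarith) (pow_pos hd0 3)
  have hfinal : HasDerivAt CS
      ((α - δ) *
      (-(2 * ((α + δ) - α * δ) * (2 * (α + δ) ^ 2 - 7 * (α * δ) * (α + δ) + 7 * (α * δ) ^ 2))
          * v ^ 2
        + (2 * (2 * ((α + δ) - α * δ)
            * (2 * (α + δ) ^ 2 - 7 * (α * δ) * (α + δ) + 7 * (α * δ) ^ 2))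
            + 8 * (α * δ) * ((α + δ) - α * δ) ^ 2) * (t * v)
        + (-8 * (α + δ) ^ 3 + 12 * (α * δ) * (α + δ) ^ 2 + 2 * (α * δ) ^ 2 * (α + δ)
            - 7 * (α * δ) ^ 3) * t ^ 2) / (4 * t * (2 * (α + δ) - 3 * α * δ) ^ 3)) 0 := by
    refine hCS.congr_deriv ?_
    have ht' : (t : ℝ) ≠ 0 := ne_of_gt ht
    have hd0' : (2 * (α + δ) - 3 * α * δ) ≠ 0 := ne_of_gt hd0
    have hY0' : (2 * (α + δ) - 3 * α * δ - 2 * (0:ℝ) * (α - δ)) ≠ 0 := hY0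
    simp only [Pi.add_apply, Pi.sub_apply, Pi.mul_apply, Pi.div_apply, Pi.pow_apply, id, Nat.cast_ofNat, Nat.reduceSub, pow_one, mul_zero, zero_mul, sub_zero, add_zero]
    generalize hD : 2 * (α + δ) - 3 * α * δ = D at hd0' ⊢
    field_simp
    subst hD
    ring
  rw [hfinal.deriv]
  exact div_neg_of_neg_of_pos hED3 hden
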